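/- Let K_1,...,K_j be convex bodies in R^n such that K_k and K_l are contained in mutually orthogonal linear subspaces for all 1 ≤ k < l ≤ j. Then R(K_1 + ... + K_j)² = R(K_1)² + ... + R(K_j)², where R denotes the Euclidean circumradius. -/

import Mathlib

open Metric Finset

/-- The Euclidean circumradius of a set `K`: the smallest `ρ ≥ 0` such that `K` is
contained in some closed ball of radius `ρ`. -/
noncomputable def circR {n : ℕ} (K : Set (EuclideanSpace ℝ (Fin n))) : ℝ :=
  sInf {ρ : ℝ | 0 ≤ ρ ∧ ∃ x, K ⊆ Metric.closedBall x ρ}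

/-- The Minkowski sum of a finite family of subsets of `ℝⁿ`. -/
def msum {n j : ℕ} (K : Fin j → Set (EuclideanSpace ℝ (Fin n))) :
    Set (EuclideanSpace ℝ (Fin n)) :=
  {x | ∃ f : Fin j → EuclideanSpace ℝ (Fin n), (∀ i, f i ∈ K i) ∧ x = ∑ i, f i}

section Aux

variable {n : ℕ}

local notation "E" => EuclideanSpace ℝ (Fin n)

lemma circR_nonneg (K : Set E) : 0 ≤ circR K :=
  Real.sInf_nonneg fun _ hx => hx.1

lemma circR_le {K : Set E} {ρ : ℝ} (h0 : 0 ≤ ρ) (h : ∃ x, K ⊆ closedBall x ρ) :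
    circR K ≤ ρ :=
  csInf_le ⟨0, fun _ hy => hy.1⟩ ⟨h0, h⟩

lemma circR_set_nonempty {K : Set E} (hK : Bornology.IsBounded K) :
    {ρ : ℝ | 0 ≤ ρ ∧ ∃ x, K ⊆ closedBall x ρ}.Nonempty := by
  obtain ⟨r, hr0, hr⟩ := hK.subset_closedBall_lt 0 0
  exact ⟨r, le_of_lt hr0, 0, hr⟩

/-- The circumradius of a nonempty compact set is attained by some center. -/
lemma exists_circCenter {K : Set E} (hK : IsCompact K) (hne : K.Nonempty) :
    ∃ c, K ⊆ closedBall c (circR K) := by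
  obtain ⟨k0, hk0⟩ := hne
  set R := circR K with hRdef
  set F : ℕ → Set E := fun m =>
    closedBall k0 (R + 1) ∩ ⋂ k ∈ K, closedBall k (R + 1 / (m + 1)) with hFdef
  have hFclosed : ∀ m, IsClosed (F m) := by
    intro m
    exact (isClosed_closedBall).inter
      (isClosed_biInter fun k _ => isClosed_closedBall)
  have hFne : ∀ m, (F m).Nonempty := by
    intro m
    have hpos : (0 : ℝ) < 1 / (m + 1) := by positivity
    obtain ⟨ρ, hρmem, hρlt⟩ :=
      Real.lt_sInf_add_pos (circR_set_nonempty hK.isBounded) hpos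
    obtain ⟨hρ0, x, hx⟩ := hρmem
    have hρR : ρ < R + 1 / (m + 1) := hρlt
    refine ⟨x, ?_, ?_⟩
    · have h1 : dist x k0 ≤ ρ := by
        rw [dist_comm]; exact hx hk0
      have h2 : (1 : ℝ) / (m + 1) ≤ 1 := by
        rw [div_le_one (by positivity)]; linarith [Nat.cast_nonneg (α := ℝ) m]
      exact mem_closedBall.mpr (by change dist x k0 ≤ _; linarith)
    · simp only [Set.mem_iInter, mem_closedBall]
      intro k hk
      have := hx hk
      rw [mem_closedBall] at this
      rw [dist_comm]
      linarith
  have hFsub : ∀ m, F (m + 1) ⊆ F m := by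
    intro m x hx
    obtain ⟨h1, h2⟩ := hx
    refine ⟨h1, ?_⟩
    simp only [Set.mem_iInter, mem_closedBall] at h2 ⊢
    intro k hk
    have h3 : (1 : ℝ) / (m + 1 + 1) ≤ 1 / (m + 1) := by
      apply div_le_div_of_nonneg_left (by norm_num) (by positivity)
      · push_cast; linarith
    have := h2 k hk
    push_cast at this ⊢
    linarith
  have hFcpt : IsCompact (F 0) :=
    (isCompact_closedBall k0 (R + 1)).of_isClosed_subset (hFclosed 0)
      Set.inter_subset_left
  obtain ⟨c, hc⟩ := IsCompact.nonempty_iInter_of_sequence_nonempty_isCompact_isClosed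
    F hFsub hFne hFcpt hFclosed
  refine ⟨c, fun k hk => ?_⟩
  rw [mem_closedBall]
  refine le_of_forall_pos_le_add fun ε hε => ?_
  obtain ⟨m, hm⟩ := exists_nat_one_div_lt hε
  have hcm : c ∈ F m := Set.mem_iInter.mp hc m
  have := hcm.2
  simp only [Set.mem_iInter, mem_closedBall] at this
  have h4 := this k hk
  rw [dist_comm] at h4
  push_cast at h4 hm
  linarith

set_option maxHeartbeats 1000000 in
/-- Key lemma: for any direction `v`, there is a farthest point `s` of `K` (at distance
exactly `circR K` from the optimal center `c`) with `⟪s - c, v⟫ ≤ 0`. -/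
lemma exists_contact {K : Set E} (hK : IsCompact K) (hne : K.Nonempty) {c : E}
    (hc : K ⊆ closedBall c (circR K)) (v : E) :
    ∃ s ∈ K, dist s c = circR K ∧ (inner ℝ (s - c) v : ℝ) ≤ 0 := by
  set R := circR K with hRdef
  have hR0 : 0 ≤ R := circR_nonneg K
  by_contra hcon
  push_neg at hcon
  -- hcon : ∀ s ∈ K, dist s c = R → 0 < ⟪s - c, v⟫
  set S : Set E := {s ∈ K | dist s c = R} with hSdef
  have hScpt : IsCompact S :=
    hK.of_isClosed_subset (hK.isClosed.inter <|
      isClosed_eq (continuous_id.dist continuous_const) continuous_const)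
      (fun _ hx => hx.1)
  by_cases hSne : S.Nonempty
  · -- contact set nonempty; get minimum of ⟪· - c, v⟫ over S
    have hcont : Continuous fun s : E => (inner ℝ (s - c) v : ℝ) :=
      (continuous_id.sub continuous_const).inner continuous_const
    obtain ⟨s1, hs1S, hs1min⟩ := hScpt.exists_isMinOn hSne hcont.continuousOn
    set δ : ℝ := inner ℝ (s1 - c) v with hδdef
    have hδpos : 0 < δ := hcon s1 hs1S.1 hs1S.2
    have hv : v ≠ 0 := by
      rintro rfl; simp [hδdef] at hδpos
    have hvpos : 0 < ‖v‖ := norm_pos_iff.mpr hv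
    have hRpos : 0 < R := by
      rcases eq_or_lt_of_le hR0 with h | h
      · exfalso
        have hs1c : s1 = c := by
          have h2 := hs1S.2; rw [← h] at h2; exact dist_eq_zero.mp h2
        have h0 : δ = 0 := by rw [hδdef, hs1c]; simp
        linarith
      · exact h
    set W : Set E := {s ∈ K | (inner ℝ (s - c) v : ℝ) ≤ δ / 2} with hWdef
    have hWcpt : IsCompact W :=
      hK.of_isClosed_subset (hK.isClosed.inter <|
        isClosed_le hcont continuous_const) (fun _ hx => hx.1)
    have hWlt : ∀ s ∈ W, dist s c < R := by
      intro s hs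
      rcases lt_or_eq_of_le (mem_closedBall.mp (hc hs.1)) with h | h
      · exact h
      · exfalso
        have hsS : s ∈ S := ⟨hs.1, h⟩
        have h1 : δ ≤ (inner ℝ (s - c) v : ℝ) := hs1min hsS
        have h2 := hs.2
        linarith
    -- get M with 0 ≤ M < R bounding dist on W
    obtain ⟨M, hM0, hMR, hMW⟩ : ∃ M, 0 ≤ M ∧ M < R ∧ ∀ s ∈ W, dist s c ≤ M := by
      by_cases hWne : W.Nonempty
      · obtain ⟨s0, hs0W, hs0max⟩ := hWcpt.exists_isMaxOn hWne
          (continuous_id.dist continuous_const).continuousOn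
        exact ⟨dist s0 c, dist_nonneg, hWlt s0 hs0W, fun s hs => hs0max hs⟩
      · exact ⟨0, le_refl 0, hRpos, fun s hs => absurd ⟨s, hs⟩ hWne⟩
    have h2v : (0:ℝ) < 2 * ‖v‖ ^ 2 := by nlinarith
    have hden : (0:ℝ) < 2 * (2 * R * ‖v‖ + ‖v‖ ^ 2) := by nlinarith
    -- choose t
    set t : ℝ := min 1 (min (δ / (2 * ‖v‖ ^ 2))
      ((R ^ 2 - M ^ 2) / (2 * (2 * R * ‖v‖ + ‖v‖ ^ 2)))) with htdef
    have htpos : 0 < t :=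
      lt_min one_pos (lt_min (div_pos hδpos h2v) (div_pos (by nlinarith) hden))
    have ht1 : t ≤ 1 := min_le_left _ _
    have ht2 : t ≤ δ / (2 * ‖v‖ ^ 2) := le_trans (min_le_right _ _) (min_le_left _ _)
    have ht3 : t ≤ (R ^ 2 - M ^ 2) / (2 * (2 * R * ‖v‖ + ‖v‖ ^ 2)) :=
      le_trans (min_le_right _ _) (min_le_right _ _)
    have ht2' : t * ‖v‖ ^ 2 ≤ δ / 2 := by
      rw [le_div_iff₀ h2v] at ht2; nlinarith
    have ht3' : 2 * t * (R * ‖v‖) + t * ‖v‖ ^ 2 ≤ (R ^ 2 - M ^ 2) / 2 := by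
      rw [le_div_iff₀ hden] at ht3; nlinarith
    -- the squared-norm bound X
    set X : ℝ := max (M ^ 2 + (R ^ 2 - M ^ 2) / 2) (R ^ 2 - t * δ / 2) with hXdef
    have hX0 : 0 ≤ X := le_trans (by nlinarith) (le_max_left _ _)
    have hXR : X < R ^ 2 := by
      apply max_lt
      · nlinarith
      · nlinarith
    have hball : K ⊆ closedBall (c + t • v) (Real.sqrt X) := by
      intro s hs
      rw [mem_closedBall, dist_eq_norm]
      have hexp : ‖s - (c + t • v)‖ ^ 2 =
          ‖s - c‖ ^ 2 - 2 * (t * inner ℝ (s - c) v) + t ^ 2 * ‖v‖ ^ 2 := by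
        have h1 : s - (c + t • v) = (s - c) - t • v := by abel
        rw [h1, norm_sub_sq_real, real_inner_smul_right, norm_smul,
          Real.norm_eq_abs, mul_pow, sq_abs]
      have hdist : ‖s - c‖ ≤ R := by
        have h5 := mem_closedBall.mp (hc hs); rwa [dist_eq_norm] at h5
      have hsq : ‖s - (c + t • v)‖ ^ 2 ≤ X := by
        by_cases hsW : s ∈ W
        · -- ⟪s - c, v⟫ ≤ δ/2 but could be negative; use the bound M
          have hdM : ‖s - c‖ ≤ M := by
            have h5 := hMW s hsW; rwa [dist_eq_norm] at h5
          have hip : |(inner ℝ (s - c) v : ℝ)| ≤ R * ‖v‖ := by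
            calc |(inner ℝ (s - c) v : ℝ)| ≤ ‖s - c‖ * ‖v‖ := abs_real_inner_le_norm _ _
              _ ≤ R * ‖v‖ := by nlinarith
          have habs : -(R * ‖v‖) ≤ (inner ℝ (s - c) v : ℝ) := neg_le_of_abs_le hip
          have e1 : ‖s - c‖ ^ 2 ≤ M ^ 2 := by nlinarith [norm_nonneg (s - c)]
          have e2 : -(2 * t * (R * ‖v‖)) ≤ 2 * (t * (inner ℝ (s - c) v : ℝ)) := by
            have h10 := mul_le_mul_of_nonneg_left habs (by linarith : (0:ℝ) ≤ 2 * t)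
            nlinarith [h10]
          have e3 : t ^ 2 * ‖v‖ ^ 2 ≤ t * ‖v‖ ^ 2 := by
            have h10 := mul_le_mul_of_nonneg_right ht1
              (mul_nonneg htpos.le (sq_nonneg ‖v‖))
            nlinarith [h10]
          refine le_trans ?_ (le_max_left _ _)
          rw [hexp]
          linarith
        · -- ⟪s - c, v⟫ > δ/2
          have hip : δ / 2 < (inner ℝ (s - c) v : ℝ) := by
            by_contra h
            exact hsW ⟨hs, not_lt.mp h⟩
          have e1 : ‖s - c‖ ^ 2 ≤ R ^ 2 := by nlinarith [norm_nonneg (s - c)]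
          have e2 : 2 * (t * (δ / 2)) ≤ 2 * (t * (inner ℝ (s - c) v : ℝ)) := by
            have h10 := mul_le_mul_of_nonneg_left hip.le (by linarith : (0:ℝ) ≤ 2 * t)
            nlinarith [h10]
          have e3 : t ^ 2 * ‖v‖ ^ 2 ≤ t * (δ / 2) := by
            have h10 := mul_le_mul_of_nonneg_left ht2' htpos.le
            nlinarith [h10]
          refine le_trans ?_ (le_max_right _ _)
          rw [hexp]
          linarith
      have h6 := Real.sqrt_le_sqrt hsq
      rwa [Real.sqrt_sq (norm_nonneg _)] at h6
    have hle := circR_le (Real.sqrt_nonneg X) ⟨_, hball⟩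
    rw [← hRdef] at hle
    have hlt : Real.sqrt X < R := by
      have h7 := Real.sqrt_lt_sqrt hX0 hXR
      rwa [Real.sqrt_sq hR0] at h7
    linarith
  · -- no contact point: every point is at distance < R, contradicting minimality
    rw [Set.not_nonempty_iff_eq_empty] at hSne
    obtain ⟨s0, hs0K, hs0max⟩ := hK.exists_isMaxOn hne
      (continuous_id.dist continuous_const).continuousOn
    have hlt : dist s0 c < R := by
      rcases lt_or_eq_of_le (mem_closedBall.mp (hc hs0K)) with h | h
      · exact h
      · exfalso
        have h8 : s0 ∈ S := ⟨hs0K, h⟩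
        rw [hSne] at h8; exact h8
    have hball : K ⊆ closedBall c (dist s0 c) := fun s hs =>
      mem_closedBall.mpr (hs0max hs)
    have h9 := circR_le dist_nonneg ⟨c, hball⟩
    rw [← hRdef] at h9
    linarith

/-- Pythagoras for a pairwise-orthogonal family. -/
lemma norm_sum_sq_of_orth {m : ℕ} (w : Fin m → E)
    (h : ∀ k l, k ≠ l → (inner ℝ (w k) (w l) : ℝ) = 0) :
    ‖∑ i, w i‖ ^ 2 = ∑ i, ‖w i‖ ^ 2 := by
  have h1 : (inner ℝ (∑ i, w i) (∑ i, w i) : ℝ) = ∑ i, (inner ℝ (w i) (w i) : ℝ) := by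
    rw [sum_inner]
    refine Finset.sum_congr rfl fun k _ => ?_
    rw [inner_sum]
    exact Finset.sum_eq_single k (fun l _ hlk => h k l (Ne.symm hlk))
      (fun hk => absurd (Finset.mem_univ k) hk)
  calc ‖∑ i, w i‖ ^ 2 = (inner ℝ (∑ i, w i) (∑ i, w i) : ℝ) :=
        (real_inner_self_eq_norm_sq _).symm
    _ = ∑ i, (inner ℝ (w i) (w i) : ℝ) := h1
    _ = ∑ i, ‖w i‖ ^ 2 := Finset.sum_congr rfl fun i _ => real_inner_self_eq_norm_sq _

/-- Projecting the center of an enclosing ball onto a subspace containing `K`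
keeps it an enclosing ball (of the same radius). -/
lemma subset_closedBall_proj {V : Submodule ℝ E} {K : Set E} (hKV : K ⊆ V) {c : E} {r : ℝ}
    (h : K ⊆ closedBall c r) :
    K ⊆ closedBall (V.orthogonalProjectionOnto c : E) r := by
  intro k hk
  set P : E := (V.orthogonalProjectionOnto c : E) with hPdef
  rw [mem_closedBall, dist_eq_norm]
  have hk' : ‖k - c‖ ≤ r := by
    have h1 := mem_closedBall.mp (h hk); rwa [dist_eq_norm] at h1
  have hmem : k - P ∈ V := Submodule.sub_mem V (hKV hk) (V.orthogonalProjectionOnto c).2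
  have hperp : c - P ∈ Vᗮ := Submodule.sub_starProjection_mem_orthogonal (K := V) c
  have hiz : (inner ℝ (k - P) (P - c) : ℝ) = 0 := by
    have h2 := (Submodule.mem_orthogonal V (c - P)).mp hperp (k - P) hmem
    have h3 : P - c = -(c - P) := by abel
    rw [h3, inner_neg_right, h2, neg_zero]
  have hsq : ‖k - P‖ ^ 2 ≤ ‖k - c‖ ^ 2 := by
    have h4 : k - c = (k - P) + (P - c) := by abel
    rw [h4, norm_add_sq_real, hiz]
    nlinarith [sq_nonneg ‖P - c‖]
  have h5 := Real.sqrt_le_sqrt hsq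
  rw [Real.sqrt_sq (norm_nonneg _), Real.sqrt_sq (norm_nonneg _)] at h5
  exact le_trans h5 hk'

end Aux

theorem sq_circumradius_additive_of_orthogonal {n j : ℕ}
    (K : Fin j → Set (EuclideanSpace ℝ (Fin n)))
    (hconv : ∀ i, Convex ℝ (K i)) (hcpt : ∀ i, IsCompact (K i))
    (hne : ∀ i, (K i).Nonempty)
    (horth : ∃ V : Fin j → Submodule ℝ (EuclideanSpace ℝ (Fin n)),
      (∀ i, K i ⊆ (V i : Set (EuclideanSpace ℝ (Fin n)))) ∧
        ∀ k l, k ≠ l → ∀ x ∈ V k, ∀ y ∈ V l, (inner ℝ x y : ℝ) = 0) :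
    circR (msum K) ^ 2 = ∑ i, circR (K i) ^ 2 := by
  classical
  obtain ⟨V, hKV, hVorth⟩ := horth
  have hcent : ∀ i, ∃ c : EuclideanSpace ℝ (Fin n),
      c ∈ V i ∧ K i ⊆ closedBall c (circR (K i)) := by
    intro i
    obtain ⟨c, hc⟩ := exists_circCenter (hcpt i) (hne i)
    exact ⟨((V i).orthogonalProjectionOnto c : EuclideanSpace ℝ (Fin n)),
      ((V i).orthogonalProjectionOnto c).2, subset_closedBall_proj (hKV i) hc⟩
  choose c hcV hc using hcent
  have hsum0 : (0:ℝ) ≤ ∑ i, circR (K i) ^ 2 := Finset.sum_nonneg fun i _ => sq_nonneg _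
  -- upper bound
  have hupper : msum K ⊆ closedBall (∑ i, c i) (Real.sqrt (∑ i, circR (K i) ^ 2)) := by
    rintro x ⟨f, hf, rfl⟩
    rw [mem_closedBall, dist_eq_norm, ← Finset.sum_sub_distrib]
    have horthw : ∀ k l, k ≠ l → (inner ℝ (f k - c k) (f l - c l) : ℝ) = 0 := fun k l hkl =>
      hVorth k l hkl _ (Submodule.sub_mem _ (hKV k (hf k)) (hcV k)) _
        (Submodule.sub_mem _ (hKV l (hf l)) (hcV l))
    have hsq := norm_sum_sq_of_orth _ horthw
    have hle : ∑ i, ‖f i - c i‖ ^ 2 ≤ ∑ i, circR (K i) ^ 2 := by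
      refine Finset.sum_le_sum fun i _ => ?_
      have h1 := mem_closedBall.mp (hc i (hf i))
      rw [dist_eq_norm] at h1
      exact pow_le_pow_left₀ (norm_nonneg _) h1 2
    rw [← Real.sqrt_sq (norm_nonneg (∑ i, (f i - c i)))]
    apply Real.sqrt_le_sqrt
    rw [hsq]
    exact hle
  have hub : circR (msum K) ≤ Real.sqrt (∑ i, circR (K i) ^ 2) :=
    circR_le (Real.sqrt_nonneg _) ⟨_, hupper⟩
  -- lower bound
  have hlb : Real.sqrt (∑ i, circR (K i) ^ 2) ≤ circR (msum K) := by
    refine le_csInf ⟨_, Real.sqrt_nonneg _, _, hupper⟩ ?_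
    rintro ρ ⟨hρ0, z, hz⟩
    have hcontact : ∀ i, ∃ s ∈ K i, dist s (c i) = circR (K i) ∧
        (inner ℝ (s - c i) (z - ∑ l, c l) : ℝ) ≤ 0 :=
      fun i => exists_contact (hcpt i) (hne i) (hc i) _
    choose s hsK hsdist hsip using hcontact
    have hmem : (∑ i, s i) ∈ msum K := ⟨s, hsK, rfl⟩
    have hρ : ‖(∑ i, s i) - z‖ ≤ ρ := by
      have h1 := mem_closedBall.mp (hz hmem); rwa [dist_eq_norm] at h1
    have hsplit : (∑ i, s i) - z = (∑ i, (s i - c i)) + ((∑ l, c l) - z) := by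
      rw [Finset.sum_sub_distrib]; abel
    have horthw : ∀ k l, k ≠ l → (inner ℝ (s k - c k) (s l - c l) : ℝ) = 0 := fun k l hkl =>
      hVorth k l hkl _ (Submodule.sub_mem _ (hKV k (hsK k)) (hcV k)) _
        (Submodule.sub_mem _ (hKV l (hsK l)) (hcV l))
    have hpyth := norm_sum_sq_of_orth _ horthw
    have hsumsq : ∑ i, ‖s i - c i‖ ^ 2 = ∑ i, circR (K i) ^ 2 :=
      Finset.sum_congr rfl fun i _ => by rw [← hsdist i, dist_eq_norm]
    have hcross : (0:ℝ) ≤ inner ℝ (∑ i, (s i - c i)) ((∑ l, c l) - z) := by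
      rw [sum_inner]
      refine Finset.sum_nonneg fun i _ => ?_
      rw [show ((∑ l, c l) - z) = -(z - ∑ l, c l) from by abel, inner_neg_right]
      linarith [hsip i]
    have hexp : ‖(∑ i, s i) - z‖ ^ 2 = (∑ i, circR (K i) ^ 2)
        + 2 * inner ℝ (∑ i, (s i - c i)) ((∑ l, c l) - z) + ‖(∑ l, c l) - z‖ ^ 2 := by
      rw [hsplit, norm_add_sq_real, hpyth, hsumsq]
    have h2 : (∑ i, circR (K i) ^ 2) ≤ ρ ^ 2 := by
      have h3 := pow_le_pow_left₀ (norm_nonneg _) hρ 2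
      nlinarith [sq_nonneg ‖(∑ l, c l) - z‖]
    have h4 := Real.sqrt_le_sqrt h2
    rwa [Real.sqrt_sq hρ0] at h4
  rw [le_antisymm hub hlb, Real.sq_sqrt hsum0]
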